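/- Let Γ ≤ O_n(Z) act sub-transitively on the signed standard basis {±e_1,...,±e_n} (no proper nonzero coordinate subspace is Γ-invariant). Then either Γ acts semi-transitively, with exactly two opposite orbits O and −O each of length n, and Fix_Γ(R^n) is the one-dimensional span of β(O), or Fix_Γ(R^n) = 0. -/

import Mathlib

open Matrix

private lemma mulVec_neg' {n : ℕ} (A : Matrix (Fin n) (Fin n) ℝ) (v : Fin n → ℝ) :
    A.mulVec (-v) = -(A.mulVec v) := by
  rw [← Matrix.mulVecLin_apply, map_neg, Matrix.mulVecLin_apply]

private lemma mulVec_injG {n : ℕ} (γ : GL (Fin n) ℝ) {x y : Fin n → ℝ}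
    (h : (γ.val).mulVec x = (γ.val).mulVec y) : x = y := by
  have h2 := congrArg (fun z => (((γ⁻¹ : GL (Fin n) ℝ)).val).mulVec z) h
  simp only [Matrix.mulVec_mulVec] at h2
  rw [Units.inv_mul] at h2
  simpa [Matrix.one_mulVec] using h2

private lemma col_injG {n : ℕ} (γ : GL (Fin n) ℝ) {i j k : Fin n} {c d : ℝ}
    (hc : c ≠ 0) (hd : d ≠ 0)
    (hi : (γ.val).mulVec (Pi.single i 1) = c • (Pi.single k 1 : Fin n → ℝ))
    (hj : (γ.val).mulVec (Pi.single j 1) = d • (Pi.single k 1 : Fin n → ℝ)) : i = j := by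
  have h1 : (γ.val).mulVec (d • (Pi.single i 1 : Fin n → ℝ))
      = (γ.val).mulVec (c • (Pi.single j 1 : Fin n → ℝ)) := by
    rw [mulVec_smul, mulVec_smul, hi, hj, smul_smul, smul_smul, mul_comm]
  have h2 := mulVec_injG γ h1
  by_contra hne
  have h3 := congrFun h2 i
  rw [Pi.smul_apply, Pi.smul_apply, Pi.single_eq_same, Pi.single_eq_of_ne hne] at h3
  simp at h3
  exact hd h3

private lemma fixed_relG {n : ℕ} (γ : GL (Fin n) ℝ)
    (hcol : ∀ j : Fin n, ∃ c : ℝ, ∃ k : Fin n, (c = 1 ∨ c = -1) ∧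
      (γ.val).mulVec (Pi.single j 1) = c • (Pi.single k 1 : Fin n → ℝ))
    {x : Fin n → ℝ} (hx : (γ.val).mulVec x = x)
    {i k : Fin n} {c : ℝ} (hc : c ≠ 0)
    (h : (γ.val).mulVec (Pi.single i 1) = c • (Pi.single k 1 : Fin n → ℝ)) :
    x k = c * x i := by
  classical
  choose d τ hsign hτ using hcol
  have hdne : ∀ j, d j ≠ 0 := by
    intro j; rcases hsign j with h' | h' <;> rw [h'] <;> norm_num
  have hexp : x = ∑ j, x j • (Pi.single j (1:ℝ) : Fin n → ℝ) := by
    conv_lhs => rw [← Finset.univ_sum_single x]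
    refine Finset.sum_congr rfl fun j _ => ?_
    ext l
    rcases eq_or_ne l j with hl | hl
    · subst hl; simp
    · simp [Pi.single_eq_of_ne hl]
  have hmv : (γ.val).mulVec x = ∑ j, (x j • (d j • (Pi.single (τ j) (1:ℝ) : Fin n → ℝ))) := by
    conv_lhs => rw [hexp]
    rw [← Matrix.mulVecLin_apply, map_sum]
    refine Finset.sum_congr rfl fun j _ => ?_
    rw [_root_.map_smul, Matrix.mulVecLin_apply, hτ]
  have hk := congrFun (hmv.symm.trans hx) k
  rw [Finset.sum_apply] at hk
  rw [Finset.sum_eq_single i] at hk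
  · have hτi : τ i = k := by
      by_contra hne
      have h4 := congrFun ((hτ i).symm.trans h) (τ i)
      simp [Pi.single_eq_of_ne hne] at h4
      exact hdne i h4
    have hdi : d i = c := by
      have h5 := congrFun ((hτ i).symm.trans h) k
      simpa [hτi] using h5
    rw [← hk]
    simp [hτi, hdi]; ring
  · intro j _ hji
    have hτj : τ j ≠ k := by
      intro hqeq
      have h' : (γ.val).mulVec (Pi.single j 1) = d j • (Pi.single k 1 : Fin n → ℝ) := by
        rw [hτ j, hqeq]
      exact hji (col_injG γ hc (hdne j) h h').symm
    simp [Pi.single_eq_of_ne (Ne.symm hτj)]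
  · simp


/-- Let `Γ ≤ O_n(ℤ)` act sub-transitively on the signed standard basis
`{±e_1,…,±e_n}` (no proper nonzero coordinate subspace is `Γ`-invariant).
Then either `Γ` acts semi-transitively, with exactly two opposite orbits `O`
and `−O` each of length `n`, and `Fix_Γ(ℝⁿ)` is the one-dimensional span of the
barycenter `β(O)`, or `Fix_Γ(ℝⁿ) = 0`. -/
theorem subtransitive_dichotomy
    (n : ℕ) (hn : 0 < n) (Γ : Subgroup (GL (Fin n) ℝ))
    (S : Set (Fin n → ℝ))
    (hS : S = {v | ∃ i : Fin n, v = Pi.single i 1 ∨ v = -Pi.single i 1})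
    (hsigned : ∀ γ ∈ Γ, ∀ v ∈ S, γ.val.mulVec v ∈ S)
    (orb : (Fin n → ℝ) → Set (Fin n → ℝ))
    (horb : ∀ v, orb v = {w | ∃ γ ∈ Γ, γ.val.mulVec v = w})
    (β : Set (Fin n → ℝ) → (Fin n → ℝ))
    (hβ : ∀ O : Set (Fin n → ℝ), β O = (O.ncard : ℝ)⁻¹ • ∑ᶠ x ∈ O, x)
    (hsub : ∀ I : Set (Fin n), I.Nonempty → I ≠ Set.univ →
      ¬ (∀ γ ∈ Γ, ∀ x ∈ Submodule.span ℝ ((fun i => Pi.single i (1:ℝ)) '' I),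
            γ.val.mulVec x ∈ Submodule.span ℝ ((fun i => Pi.single i (1:ℝ)) '' I))) :
    (∃ v ∈ S,
        (orb v).ncard = n ∧
        orb v ≠ (fun y => -y) '' orb v ∧
        (∀ w ∈ S, orb w = orb v ∨ orb w = (fun y => -y) '' orb v) ∧
        {x | ∀ γ ∈ Γ, γ.val.mulVec x = x} = ↑(Submodule.span ℝ {β (orb v)}) ∧
        Module.finrank ℝ (Submodule.span ℝ {β (orb v)}) = 1) ∨
    {x | ∀ γ ∈ Γ, γ.val.mulVec x = x} = {0} := by
  classical
  have hcol : ∀ γ ∈ Γ, ∀ j : Fin n, ∃ c : ℝ, ∃ k : Fin n, (c = 1 ∨ c = -1) ∧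
      (γ.val).mulVec (Pi.single j 1) = c • (Pi.single k 1 : Fin n → ℝ) := by
    intro γ hγ j
    have hmem := hsigned γ hγ _ (by rw [hS]; exact ⟨j, Or.inl rfl⟩)
    rw [hS] at hmem
    obtain ⟨k, hk | hk⟩ := hmem
    · exact ⟨1, k, Or.inl rfl, by simpa using hk⟩
    · exact ⟨-1, k, Or.inr rfl, by rw [hk]; ext l; simp⟩
  have hmemorb : ∀ v, v ∈ orb v := fun v => by
    rw [horb]; exact ⟨1, Γ.one_mem, by simp [Units.val_one, Matrix.one_mulVec]⟩
  have horbγ : ∀ γ ∈ Γ, ∀ v w, w ∈ orb v → γ.val.mulVec w ∈ orb v := by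
    intro γ hγ v w hw
    rw [horb] at hw ⊢
    obtain ⟨δ, hδ, hδw⟩ := hw
    exact ⟨γ * δ, Γ.mul_mem hγ hδ, by rw [Units.val_mul, ← Matrix.mulVec_mulVec, hδw]⟩
  have horbeq : ∀ v w, w ∈ orb v → orb w = orb v := by
    intro v w hw
    rw [horb] at hw; obtain ⟨δ, hδ, hδw⟩ := hw
    ext y; rw [horb, horb]
    constructor
    · rintro ⟨γ, hγ, rfl⟩
      refine ⟨γ * δ, Γ.mul_mem hγ hδ, ?_⟩
      rw [Units.val_mul, ← Matrix.mulVec_mulVec, hδw]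
    · rintro ⟨γ, hγ, rfl⟩
      refine ⟨γ * δ⁻¹, Γ.mul_mem hγ (Γ.inv_mem hδ), ?_⟩
      rw [Units.val_mul, ← Matrix.mulVec_mulVec, ← hδw, Matrix.mulVec_mulVec,
        Matrix.mulVec_mulVec, mul_assoc]
      rw [Units.inv_mul, mul_one]
  have hnegorb : ∀ v, (fun y => -y) '' orb v = orb (-v) := by
    intro v; ext y
    simp only [Set.mem_image, horb, Set.mem_setOf_eq]
    constructor
    · rintro ⟨z, ⟨γ, hγ, rfl⟩, rfl⟩
      exact ⟨γ, hγ, by rw [mulVec_neg']⟩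
    · rintro ⟨γ, hγ, rfl⟩
      exact ⟨γ.val.mulVec v, ⟨γ, hγ, rfl⟩, by rw [mulVec_neg']⟩
  have horbS : ∀ v ∈ S, ∀ w ∈ orb v, w ∈ S := by
    intro v hv w hw
    rw [horb] at hw; obtain ⟨γ, hγ, rfl⟩ := hw
    exact hsigned γ hγ v hv
  have hTneg : ∀ v y, y ∈ orb v ∪ orb (-v) → -y ∈ orb v ∪ orb (-v) := by
    intro v y hy
    rcases hy with hy | hy
    · right; rw [← hnegorb]; exact ⟨y, hy, rfl⟩
    · left
      rw [← hnegorb] at hy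
      obtain ⟨z, hz, hzy⟩ := hy
      have : z = -y := by rw [← hzy, neg_neg]
      rwa [← this]
  have hfull : ∀ v ∈ S, ∀ i : Fin n, (Pi.single i 1 : Fin n → ℝ) ∈ orb v ∪ orb (-v) := by
    intro v hv
    have hTγ : ∀ γ ∈ Γ, ∀ y ∈ orb v ∪ orb (-v), γ.val.mulVec y ∈ orb v ∪ orb (-v) := by
      intro γ hγ y hy
      rcases hy with hy | hy
      · exact Or.inl (horbγ γ hγ _ _ hy)
      · exact Or.inr (horbγ γ hγ _ _ hy)
    set I : Set (Fin n) := {i | (Pi.single i 1 : Fin n → ℝ) ∈ orb v ∪ orb (-v)} with hI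
    have hIinv : ∀ γ ∈ Γ, ∀ x ∈ Submodule.span ℝ ((fun i => Pi.single i (1:ℝ)) '' I),
        γ.val.mulVec x ∈ Submodule.span ℝ ((fun i => Pi.single i (1:ℝ)) '' I) := by
      intro γ hγ x hx
      have hmap : (Submodule.span ℝ ((fun i => Pi.single i (1:ℝ)) '' I)).map
          (Matrix.mulVecLin γ.val) ≤ Submodule.span ℝ ((fun i => Pi.single i (1:ℝ)) '' I) := by
        rw [Submodule.map_span]
        apply Submodule.span_le.2
        rintro _ ⟨_, ⟨i, hiI, rfl⟩, rfl⟩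
        obtain ⟨c, k, hsgn, hck⟩ := hcol γ hγ i
        have hgi : Matrix.mulVecLin γ.val (Pi.single i (1:ℝ)) = c • (Pi.single k 1 : Fin n → ℝ) := hck
        have hγiT : (c • (Pi.single k 1 : Fin n → ℝ)) ∈ orb v ∪ orb (-v) := by
          rw [← hck]; exact hTγ γ hγ _ hiI
        have hkI : k ∈ I := by
          rcases hsgn with rfl | rfl
          · rw [hI]; simpa using hγiT
          · have h1 : -(Pi.single k 1 : Fin n → ℝ) ∈ orb v ∪ orb (-v) := by
              have h2 : ((-1 : ℝ) • (Pi.single k 1 : Fin n → ℝ)) = -(Pi.single k 1 : Fin n → ℝ) := by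
                ext l; simp
              rwa [h2] at hγiT
            have h3 := hTneg v _ h1
            rw [neg_neg] at h3
            exact h3
        rw [SetLike.mem_coe, hgi]
        exact Submodule.smul_mem _ c (Submodule.subset_span ⟨k, hkI, rfl⟩)
      exact hmap ⟨x, hx, rfl⟩
    have hIne : I.Nonempty := by
      have hvT : v ∈ orb v ∪ orb (-v) := Or.inl (hmemorb v)
      rw [hS] at hv
      obtain ⟨i, hi | hi⟩ := hv
      · exact ⟨i, by rw [hI, Set.mem_setOf_eq, ← hi]; exact hvT⟩
      · refine ⟨i, ?_⟩
        have h4 := hTneg v v hvT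
        have h5 : -v = (Pi.single i 1 : Fin n → ℝ) := by rw [hi, neg_neg]
        show (Pi.single i 1 : Fin n → ℝ) ∈ orb v ∪ orb (-v)
        exact Set.mem_of_eq_of_mem h5.symm h4
    have hIuniv : I = Set.univ := by
      by_contra hne
      exact hsub I hIne hne hIinv
    intro i
    have : i ∈ I := hIuniv ▸ Set.mem_univ i
    exact this
  by_cases hcase : ∃ v ∈ S, orb v ≠ (fun y => -y) '' orb v
  · -- semi-transitive case
    obtain ⟨v, hvS, hvne⟩ := hcase
    left
    refine ⟨v, hvS, ?_⟩
    have hdisj : ∀ y, y ∈ orb v → y ∈ orb (-v) → False := by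
      intro y h1 h2
      apply hvne
      rw [hnegorb, ← horbeq _ _ h1, ← horbeq _ _ h2]
    have hsgn2 : ∀ i : Fin n, ¬((Pi.single i 1 : Fin n → ℝ) ∈ orb v ∧
        (-(Pi.single i 1) : Fin n → ℝ) ∈ orb v) := by
      rintro i ⟨h1, h2⟩
      have h3 : (-(Pi.single i 1) : Fin n → ℝ) ∈ orb (-v) := by
        rw [← hnegorb]; exact ⟨_, h1, rfl⟩
      exact hdisj _ h2 h3
    set ε : Fin n → ℝ := fun i => if (Pi.single i 1 : Fin n → ℝ) ∈ orb v then 1 else -1 with hε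
    set u : Fin n → (Fin n → ℝ) := fun i => ε i • (Pi.single i 1 : Fin n → ℝ) with hu
    have hεpm : ∀ i, ε i = 1 ∨ ε i = -1 := by
      intro i; rw [hε]; dsimp only; split <;> simp
    have hεne : ∀ i, ε i ≠ 0 := by
      intro i; rcases hεpm i with h | h <;> rw [h] <;> norm_num
    have hεsq : ∀ i, ε i * ε i = 1 := by
      intro i; rcases hεpm i with h | h <;> rw [h] <;> norm_num
    have hneg1smul : ∀ k : Fin n, ((-1 : ℝ) • (Pi.single k 1 : Fin n → ℝ)) = -(Pi.single k 1) := by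
      intro k; ext l; simp
    have huO : ∀ i, u i ∈ orb v := by
      intro i
      by_cases hi : (Pi.single i 1 : Fin n → ℝ) ∈ orb v
      · rw [hu]; dsimp only; rw [hε]; dsimp only; rw [if_pos hi, one_smul]
        exact hi
      · have hiT := hfull v hvS i
        have hi2 : (Pi.single i 1 : Fin n → ℝ) ∈ orb (-v) := by
          rcases hiT with h | h
          · exact absurd h hi
          · exact h
        have hi3 : (-(Pi.single i 1) : Fin n → ℝ) ∈ orb v := by
          rw [← hnegorb] at hi2
          obtain ⟨z, hz, hzy⟩ := hi2
          have hzz : z = -(Pi.single i 1 : Fin n → ℝ) := by rw [← hzy, neg_neg]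
          rwa [← hzz]
        rw [hu]; dsimp only; rw [hε]; dsimp only; rw [if_neg hi, hneg1smul]
        exact hi3
    have hrange : orb v = Set.range u := by
      ext w
      constructor
      · intro hw
        have hwS := horbS v hvS w hw
        rw [hS] at hwS
        obtain ⟨i, hi | hi⟩ := hwS
        · refine ⟨i, ?_⟩
          have hiO : (Pi.single i 1 : Fin n → ℝ) ∈ orb v := hi ▸ hw
          rw [hu]; dsimp only; rw [hε]; dsimp only; rw [if_pos hiO, one_smul, ← hi]
        · refine ⟨i, ?_⟩
          have hiO : (-(Pi.single i 1) : Fin n → ℝ) ∈ orb v := hi ▸ hw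
          have hnotO : ¬ ((Pi.single i 1 : Fin n → ℝ) ∈ orb v) := fun h => hsgn2 i ⟨h, hiO⟩
          rw [hu]; dsimp only; rw [hε]; dsimp only; rw [if_neg hnotO, hneg1smul, ← hi]
      · rintro ⟨i, rfl⟩
        exact huO i
    have huinj : Function.Injective u := by
      intro i j hij
      by_contra hne
      have h6 := congrFun hij i
      rw [hu] at h6; dsimp only at h6
      rw [Pi.smul_apply, Pi.smul_apply, Pi.single_eq_same, Pi.single_eq_of_ne hne] at h6
      simp at h6
      exact hεne i h6
    have hncard : (orb v).ncard = n := by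
      rw [hrange, ← Set.image_univ, Set.ncard_image_of_injective _ huinj, Set.ncard_univ]
      simp
    have hall : ∀ w ∈ S, orb w = orb v ∨ orb w = (fun y => -y) '' orb v := by
      intro w hwS
      have hwT : w ∈ orb v ∪ orb (-v) := by
        rw [hS] at hwS
        obtain ⟨i, hi | hi⟩ := hwS
        · rw [hi]; exact hfull v hvS i
        · rw [hi]; exact hTneg v _ (hfull v hvS i)
      rcases hwT with h | h
      · exact Or.inl (horbeq _ _ h)
      · right; rw [hnegorb]; exact horbeq _ _ h
    have hsum : (∑ᶠ y ∈ orb v, y) = ∑ i, u i := by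
      rw [hrange, finsum_mem_range huinj, finsum_eq_sum_of_fintype]
    have hβv : β (orb v) = (n : ℝ)⁻¹ • ∑ i, u i := by
      rw [hβ, hncard, hsum]
    have hw0 : ∀ i, (∑ j, u j) i = ε i := by
      intro i
      rw [Finset.sum_apply, Finset.sum_eq_single i]
      · rw [hu]; dsimp only; rw [Pi.smul_apply, Pi.single_eq_same]; simp
      · intro j _ hji
        rw [hu]; dsimp only; rw [Pi.smul_apply, Pi.single_eq_of_ne (Ne.symm hji)]; simp
      · simp
    have hβcoord : ∀ i, β (orb v) i = (n:ℝ)⁻¹ * ε i := by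
      intro i
      rw [hβv, Pi.smul_apply, hw0, smul_eq_mul]
    have hβne : β (orb v) ≠ 0 := by
      intro h0
      have h7 := congrFun h0 ⟨0, hn⟩
      rw [hβcoord, Pi.zero_apply] at h7
      rcases mul_eq_zero.mp h7 with h | h
      · exact inv_ne_zero (Nat.cast_ne_zero.mpr hn.ne') h
      · exact hεne _ h
    have hβfix : ∀ γ ∈ Γ, γ.val.mulVec (β (orb v)) = β (orb v) := by
      intro γ hγ
      rw [hβv, mulVec_smul]
      congr 1
      have hγu : ∀ j, ∃ k, u k = γ.val.mulVec (u j) := by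
        intro j
        have h8 : γ.val.mulVec (u j) ∈ orb v := horbγ γ hγ _ _ (huO j)
        rw [hrange] at h8
        exact h8
      choose π hπ using hγu
      have hπinj : Function.Injective π := by
        intro a b hab
        have h9 : u (π a) = u (π b) := congrArg u hab
        rw [hπ a, hπ b] at h9
        exact huinj (mulVec_injG γ h9)
      rw [← Matrix.mulVecLin_apply, map_sum]
      exact Fintype.sum_bijective π (Finite.injective_iff_bijective.mp hπinj)
        (fun j => Matrix.mulVecLin γ.val (u j)) u
        (fun j => by rw [Matrix.mulVecLin_apply, ← hπ j])
    have hfixeq : {x | ∀ γ ∈ Γ, γ.val.mulVec x = x} = ↑(Submodule.span ℝ {β (orb v)}) := by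
      ext x
      rw [Set.mem_setOf_eq, SetLike.mem_coe, Submodule.mem_span_singleton]
      constructor
      · intro hfix
        set i0 : Fin n := ⟨0, hn⟩ with hi0
        set t : ℝ := ε i0 * x i0 with ht
        have hrel : ∀ i, ε i * x i = t := by
          intro i
          have h1 := huO i0
          have h2 := huO i
          rw [horb] at h1 h2
          obtain ⟨g1, hg1, hg1e⟩ := h1
          obtain ⟨g2, hg2, hg2e⟩ := h2
          have hγmem : g2 * g1⁻¹ ∈ Γ := Γ.mul_mem hg2 (Γ.inv_mem hg1)
          have hγu : ((g2 * g1⁻¹).val).mulVec (u i0) = u i := by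
            rw [← hg1e, Units.val_mul, Matrix.mulVec_mulVec, mul_assoc, Units.inv_mul,
              mul_one, hg2e]
          have h3 : ((g2 * g1⁻¹).val).mulVec (ε i0 • (Pi.single i0 1 : Fin n → ℝ))
              = ε i • (Pi.single i 1 : Fin n → ℝ) := hγu
          rw [mulVec_smul] at h3
          have h4 := congrArg (fun z => ε i0 • z) h3
          rw [smul_smul, smul_smul, hεsq, one_smul] at h4
          have h5 := fixed_relG _ (hcol _ hγmem) (hfix _ hγmem)
            (mul_ne_zero (hεne i0) (hεne i)) h4
          calc ε i * x i = ε i * ((ε i0 * ε i) * x i0) := by rw [h5]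
          _ = (ε i * ε i) * (ε i0 * x i0) := by ring
          _ = ε i0 * x i0 := by rw [hεsq, one_mul]
        refine ⟨t * n, ?_⟩
        funext i
        rw [Pi.smul_apply, hβcoord, smul_eq_mul]
        have hxi : x i = ε i * t := by
          calc x i = (ε i * ε i) * x i := by rw [hεsq, one_mul]
          _ = ε i * (ε i * x i) := by ring
          _ = ε i * t := by rw [hrel i]
        rw [hxi]
        have hnne : (n:ℝ) ≠ 0 := Nat.cast_ne_zero.mpr hn.ne'
        field_simp
      · rintro ⟨a, rfl⟩
        intro γ hγ
        rw [mulVec_smul, hβfix γ hγ]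
    exact ⟨hncard, hvne, hall, hfixeq, finrank_span_singleton hβne⟩
  · -- all orbits symmetric: trivial fixed space
    right
    push_neg at hcase
    ext x
    simp only [Set.mem_setOf_eq, Set.mem_singleton_iff]
    constructor
    · intro hfix
      funext i
      have hei : (Pi.single i 1 : Fin n → ℝ) ∈ S := by rw [hS]; exact ⟨i, Or.inl rfl⟩
      have h1 : -(Pi.single i 1 : Fin n → ℝ) ∈ orb (Pi.single i 1) := by
        rw [hcase _ hei]
        exact ⟨_, hmemorb _, rfl⟩
      rw [horb] at h1
      obtain ⟨γ, hγ, hγe⟩ := h1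
      have h2 : (γ.val).mulVec (Pi.single i 1) = (-1 : ℝ) • (Pi.single i 1 : Fin n → ℝ) := by
        rw [hγe]; ext l; simp
      have h3 := fixed_relG γ (hcol γ hγ) (hfix γ hγ) (by norm_num : (-1:ℝ) ≠ 0) h2
      have h4 : x i = 0 := by linarith
      simpa using h4
    · rintro rfl γ hγ
      exact Matrix.mulVec_zero _
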